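/- Let p ∈ [0,1] and assume ∫_0^∞ t^p φ(t) dt < ∞ componentwise. Then ∫_0^∞ t^p ψ(t) dt ≤ (Id−K)^{-1} (∫_0^∞ t^p φ(t) dt) (Id−K)^{-1} componentwise, with equality when p = 1. -/

import Mathlib

open MeasureTheory Set Filter Topology
open scoped ENNReal NNReal

noncomputable section

/-- `phiIter d φ n` is the `(n+1)`-fold convolution `φ_{n+1}` of the kernel matrix:
`φ_1 = φ` and `φ_{n+1}(t) = ∫_0^t φ(t−s) φ_n(s) ds`. -/
def phiIter (d : ℕ) (φ : Fin d → Fin d → ℝ → ℝ) : ℕ → Fin d → Fin d → ℝ → ℝ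
  | 0 => φ
  | n + 1 => fun i j t => ∑ k, ∫ s in Ioc (0 : ℝ) t, φ i k (t - s) * phiIter d φ n k j s

/-- `ψ = Σ_{n ≥ 1} φ_n`. -/
def psiFun (d : ℕ) (φ : Fin d → Fin d → ℝ → ℝ) (i j : Fin d) (t : ℝ) : ℝ :=
  ∑' n, phiIter d φ n i j t

/-- The matrix `K = ∫_0^∞ φ(t) dt`. -/
def Kmat (d : ℕ) (φ : Fin d → Fin d → ℝ → ℝ) : Matrix (Fin d) (Fin d) ℝ :=
  Matrix.of fun i j => ∫ t in Ioi (0 : ℝ), φ i j t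

/-- Assumption (A1): the kernels are integrable and the spectral radius of `K`
is strictly less than one. -/
def A1 (d : ℕ) (φ : Fin d → Fin d → ℝ → ℝ) : Prop :=
  (∀ i j, IntegrableOn (φ i j) (Ioi 0)) ∧
    spectralRadius ℂ ((Kmat d φ).map fun x : ℝ => (x : ℂ)) < 1

attribute [local instance] Matrix.linftyOpNormedRing Matrix.linftyOpNormedAlgebra
  Matrix.linftyOpNormedAddCommGroup

lemma conv_tonelli (f g : ℝ → ℝ≥0∞) (hf : Measurable f) (hg : Measurable g) :
    ∫⁻ t in Ioi (0:ℝ), ∫⁻ s in Ioc (0:ℝ) t, f (t - s) * g s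
      = (∫⁻ u in Ioi (0:ℝ), f u) * ∫⁻ s in Ioi (0:ℝ), g s := by
  set F : ℝ × ℝ → ℝ≥0∞ := fun q => if 0 < q.2 ∧ q.2 ≤ q.1 then f (q.1 - q.2) * g q.2 else 0 with hF
  have hFmeas : Measurable F := by
    apply Measurable.ite
    · exact (measurableSet_lt measurable_const measurable_snd).inter
        (measurableSet_le measurable_snd measurable_fst)
    · exact (hf.comp (measurable_fst.sub measurable_snd)).mul (hg.comp measurable_snd)
    · exact measurable_const
  have step1 : ∀ t : ℝ, ∫⁻ s in Ioc (0:ℝ) t, f (t - s) * g s = ∫⁻ s, F (t, s) := by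
    intro t
    rw [← lintegral_indicator measurableSet_Ioc]
    congr 1; ext s
    simp only [indicator_apply, mem_Ioc, hF]
  have step2 : ∫⁻ t in Ioi (0:ℝ), ∫⁻ s, F (t, s) = ∫⁻ t, ∫⁻ s, F (t, s) := by
    refine setLIntegral_eq_of_support_subset ?_
    intro t ht
    simp only [Function.mem_support] at ht
    by_contra htle
    simp only [mem_Ioi, not_lt] at htle
    apply ht
    have : ∀ s, F (t, s) = 0 := by
      intro s; simp only [hF]
      rw [if_neg]
      rintro ⟨h1, h2⟩
      exact absurd (h1.trans_le h2) (not_lt.2 htle)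
    simp [this]
  have step3 : ∫⁻ t, ∫⁻ s, F (t, s) = ∫⁻ s, ∫⁻ t, F (t, s) :=
    lintegral_lintegral_swap hFmeas.aemeasurable
  have step4 : ∀ s : ℝ, ∫⁻ t, F (t, s) = (Ioi (0:ℝ)).indicator (fun s => g s * ∫⁻ u in Ioi (0:ℝ), f u) s := by
    intro s
    rcases le_or_gt s 0 with hs | hs
    · rw [indicator_of_notMem (by simpa using hs)]
      have : ∀ t, F (t, s) = 0 := by
        intro t; simp only [hF]; rw [if_neg]; rintro ⟨h1, _⟩; exact absurd h1 (not_lt.2 hs)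
      simp [this]
    · rw [indicator_of_mem (by simpa using hs)]
      have heq : ∀ t, F (t, s) = g s * ((Ici (0:ℝ)).indicator f) (t - s) := by
        intro t
        simp only [hF, indicator_apply, mem_Ici, sub_nonneg]
        by_cases h : s ≤ t
        · rw [if_pos ⟨hs, h⟩, if_pos h, mul_comm]
        · rw [if_neg (fun c => h c.2), if_neg h, mul_zero]
      simp_rw [heq]
      rw [lintegral_const_mul (g s) (show Measurable fun t : ℝ => (Ici (0:ℝ)).indicator f (t - s) from (hf.indicator measurableSet_Ici).comp (measurable_id.sub measurable_const))]
      congr 1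
      have : ∫⁻ t, ((Ici (0:ℝ)).indicator f) (t - s) = ∫⁻ t, ((Ici (0:ℝ)).indicator f) t := by
        simpa [sub_eq_add_neg] using lintegral_add_right_eq_self (fun t => ((Ici (0:ℝ)).indicator f) t) (-s)
      rw [this, lintegral_indicator measurableSet_Ici,
        ← Measure.restrict_congr_set Ioi_ae_eq_Ici]
  calc ∫⁻ t in Ioi (0:ℝ), ∫⁻ s in Ioc (0:ℝ) t, f (t - s) * g s
      = ∫⁻ t in Ioi (0:ℝ), ∫⁻ s, F (t, s) := by simp_rw [step1]
    _ = ∫⁻ s, ∫⁻ t, F (t, s) := by rw [step2, step3]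
    _ = ∫⁻ s, (Ioi (0:ℝ)).indicator (fun s => g s * ∫⁻ u in Ioi (0:ℝ), f u) s := by simp_rw [step4]
    _ = ∫⁻ s in Ioi (0:ℝ), g s * ∫⁻ u in Ioi (0:ℝ), f u := lintegral_indicator measurableSet_Ioi _
    _ = (∫⁻ u in Ioi (0:ℝ), f u) * ∫⁻ s in Ioi (0:ℝ), g s := by
        simp_rw [mul_comm (g _)]
        exact lintegral_const_mul _ hg

lemma meas_conv_lint (f g : ℝ → ℝ≥0∞) (hf : Measurable f) (hg : Measurable g) :
    Measurable fun t => ∫⁻ s in Ioc (0:ℝ) t, f (t - s) * g s := by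
  have step1 : ∀ t : ℝ, ∫⁻ s in Ioc (0:ℝ) t, f (t - s) * g s
      = ∫⁻ s, (fun q : ℝ × ℝ => if 0 < q.2 ∧ q.2 ≤ q.1 then f (q.1 - q.2) * g q.2 else 0) (t, s) := by
    intro t
    rw [← lintegral_indicator measurableSet_Ioc]
    congr 1; ext s
    simp only [indicator_apply, mem_Ioc]
  have hFm : Measurable (fun q : ℝ × ℝ => if 0 < q.2 ∧ q.2 ≤ q.1 then f (q.1 - q.2) * g q.2 else 0) := by
    apply Measurable.ite
    · exact (measurableSet_lt measurable_const measurable_snd).inter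
        (measurableSet_le measurable_snd measurable_fst)
    · exact (hf.comp (measurable_fst.sub measurable_snd)).mul (hg.comp measurable_snd)
    · exact measurable_const
  simp_rw [step1]
  exact hFm.lintegral_prod_right'

lemma phiIter_nonneg (d : ℕ) (φ : Fin d → Fin d → ℝ → ℝ) (hφnonneg : ∀ i j t, 0 ≤ φ i j t) :
    ∀ n i j t, 0 ≤ phiIter d φ n i j t := by
  intro n
  induction n with
  | zero => exact hφnonneg
  | succ n ih =>
    intro i j t
    show (0:ℝ) ≤ ∑ k, ∫ s in Ioc (0:ℝ) t, φ i k (t - s) * phiIter d φ n k j s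
    apply Finset.sum_nonneg
    intro k _
    apply integral_nonneg
    intro s
    exact mul_nonneg (hφnonneg _ _ _) (ih _ _ _)

lemma phiIter_meas (d : ℕ) (φ : Fin d → Fin d → ℝ → ℝ) (hφmeas : ∀ i j, Measurable (φ i j)) :
    ∀ n i j, Measurable (phiIter d φ n i j) := by
  intro n
  induction n with
  | zero => exact hφmeas
  | succ n ih =>
    intro i j
    show Measurable fun t => ∑ k, ∫ s in Ioc (0:ℝ) t, φ i k (t - s) * phiIter d φ n k j s
    apply Finset.measurable_sum
    intro k _
    have step1 : ∀ t : ℝ, ∫ s in Ioc (0:ℝ) t, φ i k (t - s) * phiIter d φ n k j s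
        = ∫ s, (fun q : ℝ × ℝ => if 0 < q.2 ∧ q.2 ≤ q.1 then φ i k (q.1 - q.2) * phiIter d φ n k j q.2 else 0) (t, s) := by
      intro t
      rw [← integral_indicator measurableSet_Ioc]
      congr 1; ext s
      simp only [indicator_apply, mem_Ioc]
    have hFm : Measurable (fun q : ℝ × ℝ => if 0 < q.2 ∧ q.2 ≤ q.1 then φ i k (q.1 - q.2) * phiIter d φ n k j q.2 else 0) := by
      apply Measurable.ite
      · exact (measurableSet_lt measurable_const measurable_snd).inter
          (measurableSet_le measurable_snd measurable_fst)
      · exact ((hφmeas i k).comp (measurable_fst.sub measurable_snd)).mul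
          ((ih k j).comp measurable_snd)
      · exact measurable_const
    simp_rw [step1]
    exact (hFm.stronglyMeasurable.integral_prod_right').measurable

lemma rpow_subadd {p : ℝ} (hp0 : 0 ≤ p) (hp1 : p ≤ 1) {x y : ℝ} (hx : 0 ≤ x) (hy : 0 ≤ y) :
    (x + y) ^ p ≤ x ^ p + y ^ p := by
  have h := NNReal.rpow_add_le_add_rpow x.toNNReal y.toNNReal hp0 hp1
  have hc : ((x.toNNReal + y.toNNReal : ℝ≥0) : ℝ) = x + y := by
    push_cast; rw [Real.coe_toNNReal x hx, Real.coe_toNNReal y hy]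
  calc (x + y) ^ p = (((x.toNNReal + y.toNNReal : ℝ≥0) : ℝ)) ^ p := by rw [hc]
    _ = (((x.toNNReal + y.toNNReal) ^ p : ℝ≥0) : ℝ) := by rw [NNReal.coe_rpow]
    _ ≤ ((x.toNNReal ^ p + y.toNNReal ^ p : ℝ≥0) : ℝ) := by exact_mod_cast h
    _ = x ^ p + y ^ p := by
        push_cast [NNReal.coe_rpow]
        rw [Real.coe_toNNReal x hx, Real.coe_toNNReal y hy]

def KE (d : ℕ) (φ : Fin d → Fin d → ℝ → ℝ) : Matrix (Fin d) (Fin d) ℝ≥0∞ :=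
  Matrix.of fun i j => ∫⁻ t in Ioi (0:ℝ), ENNReal.ofReal (φ i j t)

def BE (d : ℕ) (φ : Fin d → Fin d → ℝ → ℝ) (p : ℝ) : Matrix (Fin d) (Fin d) ℝ≥0∞ :=
  Matrix.of fun i j => ∫⁻ t in Ioi (0:ℝ), ENNReal.ofReal (t ^ p) * ENNReal.ofReal (φ i j t)

section MasterSec
variable (d : ℕ) (φ : Fin d → Fin d → ℝ → ℝ)

lemma KE_eq (hφnonneg : ∀ i j t, 0 ≤ φ i j t) (hint : ∀ i j, IntegrableOn (φ i j) (Ioi 0))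
    (i j : Fin d) : KE d φ i j = ENNReal.ofReal (Kmat d φ i j) :=
  (ofReal_integral_eq_lintegral_ofReal (hint i j) (ae_of_all _ fun t => hφnonneg i j t)).symm

lemma KE_ne_top (hφnonneg : ∀ i j t, 0 ≤ φ i j t) (hint : ∀ i j, IntegrableOn (φ i j) (Ioi 0))
    (i j : Fin d) : KE d φ i j ≠ ⊤ := by
  rw [KE_eq d φ hφnonneg hint]; exact ENNReal.ofReal_ne_top

lemma KE_pow_ne_top (hφnonneg : ∀ i j t, 0 ≤ φ i j t) (hint : ∀ i j, IntegrableOn (φ i j) (Ioi 0)) :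
    ∀ n (i j : Fin d), ((KE d φ) ^ n) i j ≠ ⊤ := by
  intro n
  induction n with
  | zero =>
    intro i j
    rw [pow_zero]
    by_cases h : i = j <;> simp [Matrix.one_apply, h]
  | succ n ih =>
    intro i j
    rw [pow_succ, Matrix.mul_apply]
    refine (lt_of_le_of_lt (le_of_eq rfl) ?_).ne
    refine ENNReal.sum_lt_top.mpr fun k _ => ?_
    exact ENNReal.mul_lt_top (lt_top_iff_ne_top.2 (ih i k)) (lt_top_iff_ne_top.2 (KE_ne_top d φ hφnonneg hint k j))

lemma master (hφmeas : ∀ i j, Measurable (φ i j)) (hφnonneg : ∀ i j t, 0 ≤ φ i j t)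
    (hint : ∀ i j, IntegrableOn (φ i j) (Ioi 0)) :
    ∀ n, (∀ i j, ∫⁻ t in Ioi (0:ℝ), ENNReal.ofReal (phiIter d φ n i j t) = ((KE d φ) ^ (n+1)) i j)
      ∧ (∀ i j, (fun t => ENNReal.ofReal (phiIter d φ (n+1) i j t))
          =ᵐ[volume.restrict (Ioi (0:ℝ))]
          (fun t => ∑ k, ∫⁻ s in Ioc (0:ℝ) t, ENNReal.ofReal (φ i k (t - s))
              * ENNReal.ofReal (phiIter d φ n k j s))) := by
  have hmeasE : ∀ n k j, Measurable fun s => ENNReal.ofReal (phiIter d φ n k j s) :=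
    fun n k j => ENNReal.measurable_ofReal.comp (phiIter_meas d φ hφmeas n k j)
  have hφE : ∀ i k, Measurable fun s => ENNReal.ofReal (φ i k s) :=
    fun i k => ENNReal.measurable_ofReal.comp (hφmeas i k)
  -- the ae claim, assuming level-n lintegral identity
  have aeclaim : ∀ n, (∀ k j, ∫⁻ t in Ioi (0:ℝ), ENNReal.ofReal (phiIter d φ n k j t) = ((KE d φ) ^ (n+1)) k j)
      → (∀ i j, (fun t => ENNReal.ofReal (phiIter d φ (n+1) i j t))
          =ᵐ[volume.restrict (Ioi (0:ℝ))]
          (fun t => ∑ k, ∫⁻ s in Ioc (0:ℝ) t, ENNReal.ofReal (φ i k (t - s))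
              * ENNReal.ofReal (phiIter d φ n k j s))) := by
    intro n hI i j
    have hfin : ∀ k : Fin d, ∀ᵐ t ∂(volume.restrict (Ioi (0:ℝ))),
        (∫⁻ s in Ioc (0:ℝ) t, ENNReal.ofReal (φ i k (t - s))
            * ENNReal.ofReal (phiIter d φ n k j s)) < ⊤ := by
      intro k
      apply ae_lt_top (meas_conv_lint _ _ (hφE i k) (hmeasE n k j))
      rw [conv_tonelli _ _ (hφE i k) (hmeasE n k j)]
      rw [hI k j]
      exact ENNReal.mul_ne_top (KE_ne_top d φ hφnonneg hint i k) (KE_pow_ne_top d φ hφnonneg hint (n+1) k j)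
    rw [← ae_all_iff] at hfin
    filter_upwards [hfin] with t ht
    have hint2 : ∀ k : Fin d, IntegrableOn (fun s => φ i k (t - s) * phiIter d φ n k j s) (Ioc 0 t) := by
      intro k
      constructor
      · exact (((hφmeas i k).comp (measurable_const.sub measurable_id)).mul
          (phiIter_meas d φ hφmeas n k j)).aestronglyMeasurable
      · rw [hasFiniteIntegral_iff_norm]
        refine lt_of_le_of_lt (le_of_eq ?_) (ht k)
        apply lintegral_congr
        intro s
        rw [← ENNReal.ofReal_mul (hφnonneg i k _), Real.norm_eq_abs,
          abs_of_nonneg (mul_nonneg (hφnonneg _ _ _) (phiIter_nonneg d φ hφnonneg _ _ _ _))]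
    show ENNReal.ofReal (∑ k, ∫ s in Ioc (0:ℝ) t, φ i k (t - s) * phiIter d φ n k j s) = _
    rw [ENNReal.ofReal_sum_of_nonneg (fun k _ => integral_nonneg
      (fun s => mul_nonneg (hφnonneg _ _ _) (phiIter_nonneg d φ hφnonneg _ _ _ _)))]
    refine Finset.sum_congr rfl fun k _ => ?_
    rw [ofReal_integral_eq_lintegral_ofReal (hint2 k)
      (ae_of_all _ fun s => mul_nonneg (hφnonneg _ _ _) (phiIter_nonneg d φ hφnonneg _ _ _ _))]
    apply lintegral_congr
    intro s
    exact ENNReal.ofReal_mul (hφnonneg i k _)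
  intro n
  induction n with
  | zero =>
    constructor
    · intro i j; rw [pow_one]; rfl
    · exact aeclaim 0 (fun k j => by rw [pow_one]; rfl)
  | succ n ih =>
    have first : ∀ i j, ∫⁻ t in Ioi (0:ℝ), ENNReal.ofReal (phiIter d φ (n+1) i j t)
        = ((KE d φ) ^ (n+2)) i j := by
      intro i j
      rw [lintegral_congr_ae (ih.2 i j)]
      rw [lintegral_finset_sum _ (fun k _ => meas_conv_lint _ _ (hφE i k) (hmeasE n k j))]
      have : ∀ k, ∫⁻ t in Ioi (0:ℝ), ∫⁻ s in Ioc (0:ℝ) t, ENNReal.ofReal (φ i k (t - s))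
          * ENNReal.ofReal (phiIter d φ n k j s) = KE d φ i k * ((KE d φ) ^ (n+1)) k j := by
        intro k
        rw [conv_tonelli _ _ (hφE i k) (hmeasE n k j), ih.1 k j]; rfl
      simp_rw [this]
      rw [pow_succ' (KE d φ) (n+1), Matrix.mul_apply]
    exact ⟨first, aeclaim (n+1) first⟩

end MasterSec

-- core computation for one k
lemma moment_piece (p : ℝ) (hp : p ∈ Icc (0:ℝ) 1) (f g : ℝ → ℝ≥0∞)
    (hf : Measurable f) (hg : Measurable g) :
    (∫⁻ t in Ioi (0:ℝ), ENNReal.ofReal (t ^ p) * ∫⁻ s in Ioc (0:ℝ) t, f (t - s) * g s)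
      ≤ (∫⁻ u in Ioi (0:ℝ), ENNReal.ofReal (u ^ p) * f u) * (∫⁻ s in Ioi (0:ℝ), g s)
        + (∫⁻ u in Ioi (0:ℝ), f u) * (∫⁻ s in Ioi (0:ℝ), ENNReal.ofReal (s ^ p) * g s)
    ∧ (p = 1 →
    (∫⁻ t in Ioi (0:ℝ), ENNReal.ofReal (t ^ p) * ∫⁻ s in Ioc (0:ℝ) t, f (t - s) * g s)
      = (∫⁻ u in Ioi (0:ℝ), ENNReal.ofReal (u ^ p) * f u) * (∫⁻ s in Ioi (0:ℝ), g s)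
        + (∫⁻ u in Ioi (0:ℝ), f u) * (∫⁻ s in Ioi (0:ℝ), ENNReal.ofReal (s ^ p) * g s)) := by
  have hf' : Measurable fun u => ENNReal.ofReal (u ^ p) * f u :=
    (ENNReal.measurable_ofReal.comp (measurable_id.pow_const p)).mul hf
  have hg' : Measurable fun s => ENNReal.ofReal (s ^ p) * g s :=
    (ENNReal.measurable_ofReal.comp (measurable_id.pow_const p)).mul hg
  have hpull : ∀ t : ℝ, ENNReal.ofReal (t ^ p) * (∫⁻ s in Ioc (0:ℝ) t, f (t - s) * g s)
      = ∫⁻ s in Ioc (0:ℝ) t, ENNReal.ofReal (t ^ p) * (f (t - s) * g s) := by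
    intro t
    rw [lintegral_const_mul (ENNReal.ofReal (t ^ p)) (show Measurable fun s => f (t - s) * g s from
      (hf.comp (measurable_const.sub measurable_id)).mul hg)]
  have hsplit : ∀ t : ℝ,
      (∫⁻ s in Ioc (0:ℝ) t, (fun s => (ENNReal.ofReal ((t-s) ^ p) + ENNReal.ofReal (s ^ p)) * (f (t - s) * g s)) s)
      = (∫⁻ s in Ioc (0:ℝ) t, (fun u => ENNReal.ofReal (u ^ p) * f u) (t - s) * g s)
        + ∫⁻ s in Ioc (0:ℝ) t, f (t - s) * ((fun s => ENNReal.ofReal (s ^ p) * g s) s) := by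
    intro t
    rw [← lintegral_add_left (show Measurable fun s => (fun u => ENNReal.ofReal (u ^ p) * f u) (t - s) * g s from
      (hf'.comp (measurable_const.sub measurable_id)).mul hg)]
    apply lintegral_congr
    intro s
    simp only []
    ring
  have key : ∀ q : ℝ≥0∞ → ℝ≥0∞ → Prop, True := fun _ => trivial
  constructor
  · calc ∫⁻ t in Ioi (0:ℝ), ENNReal.ofReal (t ^ p) * ∫⁻ s in Ioc (0:ℝ) t, f (t - s) * g s
        = ∫⁻ t in Ioi (0:ℝ), ∫⁻ s in Ioc (0:ℝ) t, ENNReal.ofReal (t ^ p) * (f (t - s) * g s) := by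
          apply lintegral_congr; intro t; exact hpull t
      _ ≤ ∫⁻ t in Ioi (0:ℝ), ∫⁻ s in Ioc (0:ℝ) t,
            (ENNReal.ofReal ((t-s) ^ p) + ENNReal.ofReal (s ^ p)) * (f (t - s) * g s) := by
          apply lintegral_mono_ae
          apply ae_restrict_of_ae
          apply ae_of_all
          intro t
          apply setLIntegral_mono (by fun_prop)
          intro s hs
          rcases hs with ⟨hs0, hst⟩
          apply mul_le_mul_left
          have ht : t = (t - s) + s := by ring
          calc ENNReal.ofReal (t ^ p) = ENNReal.ofReal (((t-s) + s) ^ p) := by rw [← ht]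
            _ ≤ ENNReal.ofReal ((t-s) ^ p + s ^ p) :=
                ENNReal.ofReal_le_ofReal (rpow_subadd hp.1 hp.2 (by linarith) hs0.le)
            _ = ENNReal.ofReal ((t-s) ^ p) + ENNReal.ofReal (s ^ p) :=
                ENNReal.ofReal_add (Real.rpow_nonneg (by linarith) p) (Real.rpow_nonneg hs0.le p)
      _ = (∫⁻ t in Ioi (0:ℝ), ∫⁻ s in Ioc (0:ℝ) t, (fun u => ENNReal.ofReal (u ^ p) * f u) (t - s) * g s)
          + ∫⁻ t in Ioi (0:ℝ), ∫⁻ s in Ioc (0:ℝ) t, f (t - s) * ((fun s => ENNReal.ofReal (s ^ p) * g s) s) := by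
          rw [← lintegral_add_left]
          · apply lintegral_congr; intro t; exact hsplit t
          · exact meas_conv_lint _ _ hf' hg
      _ = _ := by rw [conv_tonelli _ _ hf' hg, conv_tonelli _ _ hf hg']
  · intro hp1
    subst hp1
    calc ∫⁻ t in Ioi (0:ℝ), ENNReal.ofReal (t ^ (1:ℝ)) * ∫⁻ s in Ioc (0:ℝ) t, f (t - s) * g s
        = ∫⁻ t in Ioi (0:ℝ), ∫⁻ s in Ioc (0:ℝ) t, ENNReal.ofReal (t ^ (1:ℝ)) * (f (t - s) * g s) := by
          apply lintegral_congr; intro t; exact hpull t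
      _ = ∫⁻ t in Ioi (0:ℝ), ∫⁻ s in Ioc (0:ℝ) t,
            (ENNReal.ofReal ((t-s) ^ (1:ℝ)) + ENNReal.ofReal (s ^ (1:ℝ))) * (f (t - s) * g s) := by
          apply lintegral_congr
          intro t
          apply setLIntegral_congr_fun measurableSet_Ioc
          intro s hs
          rcases hs with ⟨hs0, hst⟩
          congr 1
          simp only [Real.rpow_one]
          rw [← ENNReal.ofReal_add (by linarith) hs0.le]
          congr 1; ring
      _ = (∫⁻ t in Ioi (0:ℝ), ∫⁻ s in Ioc (0:ℝ) t, (fun u => ENNReal.ofReal (u ^ (1:ℝ)) * f u) (t - s) * g s)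
          + ∫⁻ t in Ioi (0:ℝ), ∫⁻ s in Ioc (0:ℝ) t, f (t - s) * ((fun s => ENNReal.ofReal (s ^ (1:ℝ)) * g s) s) := by
          rw [← lintegral_add_left]
          · apply lintegral_congr; intro t; exact hsplit t
          · exact meas_conv_lint _ _ hf' hg
      _ = _ := by rw [conv_tonelli _ _ hf' hg, conv_tonelli _ _ hf hg']

lemma matGeom (d : ℕ) (K : Matrix (Fin d) (Fin d) ℝ)
    (hρ : spectralRadius ℂ (K.map fun x : ℝ => (x:ℂ)) < 1) :
    (∀ i j : Fin d, Summable fun n : ℕ => (K ^ n) i j) ∧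
    (∀ i j : Fin d, (1 - K)⁻¹ i j = ∑' n : ℕ, (K ^ n) i j) := by
  set M : Matrix (Fin d) (Fin d) ℂ := K.map fun x : ℝ => (x:ℂ) with hM
  -- summability of powers of M
  have hsum : Summable (fun n : ℕ => M ^ n) := by
    obtain ⟨r, hr1, hr2⟩ := ENNReal.lt_iff_exists_nnreal_btwn.mp hρ
    have hg := spectrum.pow_nnnorm_pow_one_div_tendsto_nhds_spectralRadius M
    have hev : ∀ᶠ n : ℕ in atTop, (‖M ^ n‖₊ : ℝ≥0∞) ^ (1 / n : ℝ) < r :=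
      hg.eventually_lt_const hr1
    have hev2 : ∀ᶠ n : ℕ in atTop, ‖M ^ n‖ ≤ (r : ℝ) ^ n := by
      filter_upwards [hev, eventually_ge_atTop 1] with n hn hn1
      have hnn : ((n:ℝ))⁻¹ * n = 1 := inv_mul_cancel₀ (by exact_mod_cast Nat.one_le_iff_ne_zero.mp hn1)
      have h2 : ((‖M ^ n‖₊ : ℝ≥0∞) ^ (1 / n : ℝ)) ^ (n:ℝ) ≤ (r : ℝ≥0∞) ^ (n:ℝ) :=
        ENNReal.rpow_le_rpow hn.le (by positivity)
      rw [← ENNReal.rpow_mul, one_div, hnn, ENNReal.rpow_one] at h2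
      have h3 : (‖M ^ n‖₊ : ℝ≥0∞) ≤ (r : ℝ≥0∞) ^ (n:ℕ) := by rwa [ENNReal.rpow_natCast] at h2
      have h4 : ‖M ^ n‖₊ ≤ r ^ n := by rw [← ENNReal.coe_pow] at h3; exact_mod_cast h3
      calc ‖M ^ n‖ = (‖M ^ n‖₊ : ℝ) := rfl
        _ ≤ ((r ^ n : ℝ≥0) : ℝ) := by exact_mod_cast h4
        _ = (r:ℝ) ^ n := by push_cast; ring
    exact Summable.of_norm_bounded_eventually_nat
      (summable_geometric_of_lt_one r.coe_nonneg (by exact_mod_cast hr2)) hev2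
  have hpow : ∀ n : ℕ, M ^ n = (K ^ n).map fun x : ℝ => (x:ℂ) := by
    intro n
    have : M = (Complex.ofRealHom : ℝ →+* ℂ).mapMatrix K := rfl
    rw [this, ← map_pow]
    rfl
  -- entrywise summability and tsum identification
  have hentry : ∀ i j : Fin d, HasSum (fun n : ℕ => ((K ^ n) i j : ℂ)) ((∑' n : ℕ, M ^ n) i j) := by
    intro i j
    have := hsum.hasSum.map
      (⟨⟨fun A : Matrix (Fin d) (Fin d) ℂ => A i j, rfl⟩, fun _ _ => rfl⟩ : Matrix (Fin d) (Fin d) ℂ →+ ℂ)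
      ((continuous_apply j).comp (continuous_apply i))
    simp only [AddMonoidHom.coe_mk, ZeroHom.coe_mk] at this
    have heq : ((fun A : Matrix (Fin d) (Fin d) ℂ => A i j) ∘ fun n : ℕ => M ^ n)
        = fun n : ℕ => ((K ^ n) i j : ℂ) := by
      funext n
      show (M ^ n) i j = _
      rw [hpow n]; rfl
    exact heq ▸ this
  have hsumK : ∀ i j : Fin d, Summable fun n : ℕ => (K ^ n) i j := by
    intro i j
    exact Complex.summable_ofReal.mp (hentry i j).summable
  refine ⟨hsumK, ?_⟩
  set S : Matrix (Fin d) (Fin d) ℝ := Matrix.of fun i j => ∑' n : ℕ, (K ^ n) i j with hS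
  have hSmap : S.map (fun x : ℝ => (x:ℂ)) = ∑' n : ℕ, M ^ n := by
    ext i j
    have h1 : (∑' n : ℕ, M ^ n) i j = ∑' n : ℕ, ((K ^ n) i j : ℂ) := (hentry i j).tsum_eq.symm
    rw [h1]
    show ((∑' n : ℕ, (K ^ n) i j : ℝ) : ℂ) = _
    exact Complex.ofReal_tsum _
  -- tendsto zero
  have hlim : Tendsto (fun n : ℕ => M ^ n) atTop (𝓝 0) := hsum.tendsto_atTop_zero
  have h1 : (1 - M) * ∑' n : ℕ, M ^ n = 1 := by
    have ha : (1 - M) * ∑' n : ℕ, M ^ n = ∑' n : ℕ, ((M ^ n) - M ^ (n+1)) := by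
      rw [← Summable.tsum_mul_left _ hsum]
      congr 1; ext n; rw [sub_mul, one_mul, pow_succ']
    have h3 : HasSum (fun n : ℕ => (M ^ n) - M ^ (n+1)) 1 := by
      have hs : Summable (fun n : ℕ => (M ^ n) - M ^ (n+1)) :=
        hsum.sub (hsum.comp_injective (add_left_injective 1))
      rw [hs.hasSum_iff_tendsto_nat]
      have : ∀ N : ℕ, ∑ n ∈ Finset.range N, ((M ^ n) - M ^ (n+1)) = 1 - M ^ N := by
        intro N; rw [Finset.sum_range_sub' (fun n => M ^ n)]; simp
      simp_rw [this]
      simpa using (tendsto_const_nhds.sub hlim)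
    rw [ha, h3.tsum_eq]
  have h2 : (∑' n : ℕ, M ^ n) * (1 - M) = 1 := by
    have ha : (∑' n : ℕ, M ^ n) * (1 - M) = ∑' n : ℕ, ((M ^ n) - M ^ (n+1)) := by
      rw [← Summable.tsum_mul_right _ hsum]
      congr 1; ext n; rw [mul_sub, mul_one, pow_succ]
    have h3 : HasSum (fun n : ℕ => (M ^ n) - M ^ (n+1)) 1 := by
      have hs : Summable (fun n : ℕ => (M ^ n) - M ^ (n+1)) :=
        hsum.sub (hsum.comp_injective (add_left_injective 1))
      rw [hs.hasSum_iff_tendsto_nat]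
      have : ∀ N : ℕ, ∑ n ∈ Finset.range N, ((M ^ n) - M ^ (n+1)) = 1 - M ^ N := by
        intro N; rw [Finset.sum_range_sub' (fun n => M ^ n)]; simp
      simp_rw [this]
      simpa using (tendsto_const_nhds.sub hlim)
    rw [ha, h3.tsum_eq]
  -- transfer to ℝ
  have hmapinj : Function.Injective (fun A : Matrix (Fin d) (Fin d) ℝ => A.map fun x : ℝ => (x:ℂ)) := by
    intro A B hAB
    ext i j
    have h2 := congrArg (fun M : Matrix (Fin d) (Fin d) ℂ => M i j) hAB
    simp only [Matrix.map_apply] at h2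
    exact_mod_cast h2
  have hunit_r : (1 - K) * S = 1 := by
    apply hmapinj
    show ((1 - K) * S).map _ = (1 : Matrix (Fin d) (Fin d) ℝ).map _
    have : ∀ A : Matrix (Fin d) (Fin d) ℝ, A.map (fun x : ℝ => (x:ℂ)) = (Complex.ofRealHom : ℝ →+* ℂ).mapMatrix A := fun _ => rfl
    rw [this, this, map_mul, map_sub, map_one]
    have hKmap : (Complex.ofRealHom : ℝ →+* ℂ).mapMatrix K = M := rfl
    have hSmap' : (Complex.ofRealHom : ℝ →+* ℂ).mapMatrix S = ∑' n : ℕ, M ^ n := hSmap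
    rw [hKmap, hSmap', h1]
  have hunit_l : S * (1 - K) = 1 := by
    apply hmapinj
    show (S * (1 - K)).map _ = (1 : Matrix (Fin d) (Fin d) ℝ).map _
    have : ∀ A : Matrix (Fin d) (Fin d) ℝ, A.map (fun x : ℝ => (x:ℂ)) = (Complex.ofRealHom : ℝ →+* ℂ).mapMatrix A := fun _ => rfl
    rw [this, this, map_mul, map_sub, map_one]
    have hKmap : (Complex.ofRealHom : ℝ →+* ℂ).mapMatrix K = M := rfl
    have hSmap' : (Complex.ofRealHom : ℝ →+* ℂ).mapMatrix S = ∑' n : ℕ, M ^ n := hSmap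
    rw [hKmap, hSmap', h2]
  intro i j
  rw [Matrix.inv_eq_right_inv hunit_r]
  rfl

lemma tsum_antidiag (T : ℕ → ℕ → ℝ≥0∞) :
    ∑' n : ℕ, ∑ x ∈ Finset.HasAntidiagonal.antidiagonal n, T x.1 x.2 = ∑' a : ℕ, ∑' b : ℕ, T a b := by
  rw [← ENNReal.tsum_prod]
  rw [← Finset.HasAntidiagonal.sigmaAntidiagonalEquivProd.tsum_eq (fun p : ℕ × ℕ => T p.1 p.2)]
  rw [ENNReal.tsum_sigma']
  congr 1
  funext n
  rw [← Finset.tsum_subtype]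
  rfl

lemma antidiag_succ (d : ℕ) (A B : Matrix (Fin d) (Fin d) ℝ≥0∞) (n : ℕ) :
    ∑ x ∈ Finset.HasAntidiagonal.antidiagonal (n+1), A ^ x.1 * B * A ^ x.2
      = B * A ^ (n+1) + A * ∑ x ∈ Finset.HasAntidiagonal.antidiagonal n, A ^ x.1 * B * A ^ x.2 := by
  rw [Finset.Nat.antidiagonal_succ, Finset.sum_cons, Finset.sum_map]
  simp only [Function.Embedding.coeFn_mk, Function.Embedding.coe_prodMap, Prod.map_apply, Function.Embedding.refl_apply]
  rw [pow_zero, one_mul]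
  congr 1
  rw [Finset.mul_sum]
  apply Finset.sum_congr rfl
  intro x hx
  show A ^ (x.1 + 1) * B * A ^ x.2 = _
  rw [pow_succ' A x.1, mul_assoc, mul_assoc, mul_assoc]

lemma triple_apply {α : Type*} [CommSemiring α] {d : ℕ} (A B C : Matrix (Fin d) (Fin d) α) (i j : Fin d) :
    (A * B * C) i j = ∑ l, ∑ k, A i k * B k l * C l j := by
  rw [Matrix.mul_apply]
  apply Finset.sum_congr rfl
  intro l _
  rw [Matrix.mul_apply, Finset.sum_mul]

lemma J_bound (d : ℕ) (φ : Fin d → Fin d → ℝ → ℝ) (hφmeas : ∀ i j, Measurable (φ i j))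
    (hφnonneg : ∀ i j t, 0 ≤ φ i j t) (hint : ∀ i j, IntegrableOn (φ i j) (Ioi 0))
    (p : ℝ) (hp : p ∈ Icc (0:ℝ) 1) :
    ∀ n, ∀ i j,
      (∫⁻ t in Ioi (0:ℝ), ENNReal.ofReal (t ^ p) * ENNReal.ofReal (phiIter d φ n i j t))
        ≤ (∑ x ∈ Finset.HasAntidiagonal.antidiagonal n, (KE d φ) ^ x.1 * BE d φ p * (KE d φ) ^ x.2) i j
      ∧ (p = 1 →
      (∫⁻ t in Ioi (0:ℝ), ENNReal.ofReal (t ^ p) * ENNReal.ofReal (phiIter d φ n i j t))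
        = (∑ x ∈ Finset.HasAntidiagonal.antidiagonal n, (KE d φ) ^ x.1 * BE d φ p * (KE d φ) ^ x.2) i j) := by
  have hmeasE : ∀ n k j, Measurable fun s => ENNReal.ofReal (phiIter d φ n k j s) :=
    fun n k j => ENNReal.measurable_ofReal.comp (phiIter_meas d φ hφmeas n k j)
  have hφE : ∀ i k, Measurable fun s => ENNReal.ofReal (φ i k s) :=
    fun i k => ENNReal.measurable_ofReal.comp (hφmeas i k)
  have hbase : ∀ i j : Fin d,
      (∑ x ∈ Finset.HasAntidiagonal.antidiagonal 0, (KE d φ) ^ x.1 * BE d φ p * (KE d φ) ^ x.2) i j = BE d φ p i j := by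
    intro i j
    rw [Finset.Nat.antidiagonal_zero, Finset.sum_singleton]
    simp [pow_zero, one_mul, mul_one]
  -- main decomposition for succ
  have hstep : ∀ n i j,
      ((∫⁻ t in Ioi (0:ℝ), ENNReal.ofReal (t ^ p) * ENNReal.ofReal (phiIter d φ (n+1) i j t))
        ≤ ∑ k, ((BE d φ p) i k * ((KE d φ) ^ (n+1)) k j
            + (KE d φ) i k * ∫⁻ t in Ioi (0:ℝ), ENNReal.ofReal (t ^ p) * ENNReal.ofReal (phiIter d φ n k j t)))
      ∧ (p = 1 →
      (∫⁻ t in Ioi (0:ℝ), ENNReal.ofReal (t ^ p) * ENNReal.ofReal (phiIter d φ (n+1) i j t))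
        = ∑ k, ((BE d φ p) i k * ((KE d φ) ^ (n+1)) k j
            + (KE d φ) i k * ∫⁻ t in Ioi (0:ℝ), ENNReal.ofReal (t ^ p) * ENNReal.ofReal (phiIter d φ n k j t))) := by
    intro n i j
    have hae := (master d φ hφmeas hφnonneg hint n).2 i j
    have hI := (master d φ hφmeas hφnonneg hint n).1
    have hcongr : (∫⁻ t in Ioi (0:ℝ), ENNReal.ofReal (t ^ p) * ENNReal.ofReal (phiIter d φ (n+1) i j t))
        = ∑ k, ∫⁻ t in Ioi (0:ℝ), ENNReal.ofReal (t ^ p)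
            * ∫⁻ s in Ioc (0:ℝ) t, ENNReal.ofReal (φ i k (t - s)) * ENNReal.ofReal (phiIter d φ n k j s) := by
      have h1 : (fun t => ENNReal.ofReal (t ^ p) * ENNReal.ofReal (phiIter d φ (n+1) i j t))
          =ᵐ[volume.restrict (Ioi (0:ℝ))]
          (fun t => ∑ k, ENNReal.ofReal (t ^ p)
            * ∫⁻ s in Ioc (0:ℝ) t, ENNReal.ofReal (φ i k (t - s)) * ENNReal.ofReal (phiIter d φ n k j s)) := by
        filter_upwards [hae] with t ht
        rw [show ENNReal.ofReal (phiIter d φ (n+1) i j t)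
            = ∑ k, ∫⁻ s in Ioc (0:ℝ) t, ENNReal.ofReal (φ i k (t - s)) * ENNReal.ofReal (phiIter d φ n k j s) from ht,
          Finset.mul_sum]
      rw [lintegral_congr_ae h1, lintegral_finset_sum _ (fun k _ =>
        show Measurable fun t => ENNReal.ofReal (t ^ p)
            * ∫⁻ s in Ioc (0:ℝ) t, ENNReal.ofReal (φ i k (t - s)) * ENNReal.ofReal (phiIter d φ n k j s) from
          (ENNReal.measurable_ofReal.comp (measurable_id.pow_const p)).mul
            (meas_conv_lint _ _ (hφE i k) (hmeasE n k j)))]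
    have hpiece : ∀ k : Fin d,
        ((∫⁻ t in Ioi (0:ℝ), ENNReal.ofReal (t ^ p)
            * ∫⁻ s in Ioc (0:ℝ) t, ENNReal.ofReal (φ i k (t - s)) * ENNReal.ofReal (phiIter d φ n k j s))
          ≤ (BE d φ p) i k * ((KE d φ) ^ (n+1)) k j
            + (KE d φ) i k * ∫⁻ t in Ioi (0:ℝ), ENNReal.ofReal (t ^ p) * ENNReal.ofReal (phiIter d φ n k j t))
        ∧ (p = 1 →
        (∫⁻ t in Ioi (0:ℝ), ENNReal.ofReal (t ^ p)
            * ∫⁻ s in Ioc (0:ℝ) t, ENNReal.ofReal (φ i k (t - s)) * ENNReal.ofReal (phiIter d φ n k j s))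
          = (BE d φ p) i k * ((KE d φ) ^ (n+1)) k j
            + (KE d φ) i k * ∫⁻ t in Ioi (0:ℝ), ENNReal.ofReal (t ^ p) * ENNReal.ofReal (phiIter d φ n k j t)) := by
      intro k
      have hmp := moment_piece p hp (fun u => ENNReal.ofReal (φ i k u))
        (fun s => ENNReal.ofReal (phiIter d φ n k j s)) (hφE i k) (hmeasE n k j)
      rw [hI k j] at hmp
      exact hmp
    constructor
    · rw [hcongr]
      exact Finset.sum_le_sum fun k _ => (hpiece k).1
    · intro hp1
      rw [hcongr]
      exact Finset.sum_congr rfl fun k _ => (hpiece k).2 hp1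
  intro n
  induction n with
  | zero =>
    intro i j
    rw [hbase i j]
    exact ⟨le_of_eq rfl, fun _ => rfl⟩
  | succ n ih =>
    intro i j
    have halg : (∑ x ∈ Finset.HasAntidiagonal.antidiagonal (n+1), (KE d φ) ^ x.1 * BE d φ p * (KE d φ) ^ x.2) i j
        = ∑ k, ((BE d φ p) i k * ((KE d φ) ^ (n+1)) k j
            + (KE d φ) i k * (∑ x ∈ Finset.HasAntidiagonal.antidiagonal n, (KE d φ) ^ x.1 * BE d φ p * (KE d φ) ^ x.2) k j) := by
      rw [antidiag_succ, Matrix.add_apply, Matrix.mul_apply, Matrix.mul_apply, ← Finset.sum_add_distrib]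
    constructor
    · calc _ ≤ _ := (hstep n i j).1
        _ ≤ ∑ k, ((BE d φ p) i k * ((KE d φ) ^ (n+1)) k j
            + (KE d φ) i k * (∑ x ∈ Finset.HasAntidiagonal.antidiagonal n, (KE d φ) ^ x.1 * BE d φ p * (KE d φ) ^ x.2) k j) := by
            apply Finset.sum_le_sum
            intro k _
            exact add_le_add le_rfl (mul_le_mul_right (ih k j).1 _)
        _ = _ := halg.symm
    · intro hp1
      rw [(hstep n i j).2 hp1, halg]
      apply Finset.sum_congr rfl
      intro k _
      rw [(ih k j).2 hp1]


/-- For `p ∈ [0,1]` with `∫_0^∞ t^p φ(t) dt < ∞` componentwise, one has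
`∫_0^∞ t^p ψ(t) dt ≤ (Id−K)⁻¹ (∫_0^∞ t^p φ(t) dt) (Id−K)⁻¹` componentwise, with
equality when `p = 1`. -/
theorem psi_moment_bound (d : ℕ) (φ : Fin d → Fin d → ℝ → ℝ)
    (hφmeas : ∀ i j, Measurable (φ i j)) (hφnonneg : ∀ i j t, 0 ≤ φ i j t)
    (hA1 : A1 d φ) (p : ℝ) (hp : p ∈ Icc (0 : ℝ) 1)
    (hmom : ∀ i j, IntegrableOn (fun t => t ^ p * φ i j t) (Ioi 0)) :
    (∀ i j,
      ∫⁻ t in Ioi (0 : ℝ), ENNReal.ofReal (t ^ p * psiFun d φ i j t)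
        ≤ ENNReal.ofReal
            (((1 - Kmat d φ)⁻¹ *
                (Matrix.of fun i j => ∫ t in Ioi (0 : ℝ), t ^ p * φ i j t) *
                (1 - Kmat d φ)⁻¹) i j)) ∧
    (p = 1 → ∀ i j,
      ∫⁻ t in Ioi (0 : ℝ), ENNReal.ofReal (t ^ p * psiFun d φ i j t)
        = ENNReal.ofReal
            (((1 - Kmat d φ)⁻¹ *
                (Matrix.of fun i j => ∫ t in Ioi (0 : ℝ), t ^ p * φ i j t) *
                (1 - Kmat d φ)⁻¹) i j)) := by
  obtain ⟨hint, hρ⟩ := hA1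
  set K := Kmat d φ with hK
  obtain ⟨hsumK, hinv⟩ := matGeom d K hρ
  -- nonnegativity of K powers
  have hKnn : ∀ i j, 0 ≤ K i j := fun i j =>
    setIntegral_nonneg measurableSet_Ioi fun t _ => hφnonneg i j t
  have hKpow_nn : ∀ n, ∀ i j : Fin d, 0 ≤ (K ^ n) i j := by
    intro n
    induction n with
    | zero =>
      intro i j; rw [pow_zero]
      by_cases h : i = j <;> simp [Matrix.one_apply, h]
    | succ n ih =>
      intro i j
      rw [pow_succ, Matrix.mul_apply]
      exact Finset.sum_nonneg fun k _ => mul_nonneg (ih i k) (hKnn k j)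
  have hKE_pow : ∀ n, ∀ i j : Fin d, ((KE d φ) ^ n) i j = ENNReal.ofReal ((K ^ n) i j) := by
    intro n
    induction n with
    | zero =>
      intro i j; rw [pow_zero, pow_zero]
      by_cases h : i = j <;> simp [Matrix.one_apply, h]
    | succ n ih =>
      intro i j
      rw [pow_succ, pow_succ, Matrix.mul_apply, Matrix.mul_apply,
        ENNReal.ofReal_sum_of_nonneg fun k _ => mul_nonneg (hKpow_nn n i k) (hKnn k j)]
      apply Finset.sum_congr rfl
      intro k _
      rw [ih i k, KE_eq d φ hφnonneg hint k j, ← ENNReal.ofReal_mul (hKpow_nn n i k)]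
  -- inverse entries
  have hSnn : ∀ i j : Fin d, 0 ≤ (1 - K)⁻¹ i j := by
    intro i j; rw [hinv i j]; exact tsum_nonneg fun n => hKpow_nn n i j
  have hS_ofReal : ∀ i j : Fin d, ENNReal.ofReal ((1 - K)⁻¹ i j) = ∑' a : ℕ, ((KE d φ) ^ a) i j := by
    intro i j
    rw [hinv i j, ENNReal.ofReal_tsum_of_nonneg (fun n => hKpow_nn n i j) (hsumK i j)]
    exact tsum_congr fun a => (hKE_pow a i j).symm
  -- moment matrix
  have hMpnn : ∀ i j : Fin d, 0 ≤ ∫ t in Ioi (0:ℝ), t ^ p * φ i j t := fun i j =>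
    setIntegral_nonneg measurableSet_Ioi fun t ht =>
      mul_nonneg (Real.rpow_nonneg (le_of_lt ht) p) (hφnonneg i j t)
  have hBEeq : ∀ i j : Fin d, ENNReal.ofReal (∫ t in Ioi (0:ℝ), t ^ p * φ i j t) = BE d φ p i j := by
    intro i j
    rw [ofReal_integral_eq_lintegral_ofReal (hmom i j)
      ((ae_restrict_iff' measurableSet_Ioi).2 (ae_of_all _ fun t ht =>
        mul_nonneg (Real.rpow_nonneg (le_of_lt ht) p) (hφnonneg i j t)))]
    apply setLIntegral_congr_fun measurableSet_Ioi
    intro t ht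
    exact ENNReal.ofReal_mul (Real.rpow_nonneg (le_of_lt ht) p)
  -- RHS identification
  have hRHS : ∀ i j : Fin d,
      ENNReal.ofReal (((1 - K)⁻¹ * (Matrix.of fun i j => ∫ t in Ioi (0:ℝ), t ^ p * φ i j t) * (1 - K)⁻¹) i j)
        = ∑' n : ℕ, (∑ x ∈ Finset.HasAntidiagonal.antidiagonal n, (KE d φ) ^ x.1 * BE d φ p * (KE d φ) ^ x.2) i j := by
    intro i j
    have hswap : ∀ (m : ℕ) (f : Fin m → ℕ → ℝ≥0∞), ∑ k, ∑' a : ℕ, f k a = ∑' a : ℕ, ∑ k, f k a :=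
      fun m f => (Summable.tsum_finsetSum fun _ _ => ENNReal.summable).symm
    rw [triple_apply]
    simp only [Matrix.of_apply]
    rw [ENNReal.ofReal_sum_of_nonneg (fun l _ => Finset.sum_nonneg fun k _ =>
      mul_nonneg (mul_nonneg (hSnn i k) (hMpnn k l)) (hSnn l j))]
    have h1 : ∀ l : Fin d, ENNReal.ofReal (∑ k, (1 - K)⁻¹ i k
          * (∫ t in Ioi (0:ℝ), t ^ p * φ k l t) * (1 - K)⁻¹ l j)
        = ∑ k, (∑' a : ℕ, ((KE d φ) ^ a) i k) * BE d φ p k l * (∑' b : ℕ, ((KE d φ) ^ b) l j) := by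
      intro l
      rw [ENNReal.ofReal_sum_of_nonneg (fun k _ =>
        mul_nonneg (mul_nonneg (hSnn i k) (hMpnn k l)) (hSnn l j))]
      apply Finset.sum_congr rfl
      intro k _
      rw [ENNReal.ofReal_mul (mul_nonneg (hSnn i k) (hMpnn k l)),
        ENNReal.ofReal_mul (hSnn i k), hS_ofReal i k, hS_ofReal l j]
      congr 1
      congr 1
      exact hBEeq k l
    simp_rw [h1]
    have h2 : ∀ l k : Fin d, (∑' a : ℕ, ((KE d φ) ^ a) i k) * BE d φ p k l * (∑' b : ℕ, ((KE d φ) ^ b) l j)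
        = ∑' a : ℕ, ∑' b : ℕ, ((KE d φ) ^ a) i k * BE d φ p k l * ((KE d φ) ^ b) l j := by
      intro l k
      rw [← ENNReal.tsum_mul_right, ← ENNReal.tsum_mul_right]
      apply tsum_congr
      intro a
      rw [← ENNReal.tsum_mul_left]
    simp_rw [h2, hswap]
    calc ∑' (a : ℕ) (b : ℕ), ∑ l, ∑ k, ((KE d φ) ^ a) i k * BE d φ p k l * ((KE d φ) ^ b) l j
        = ∑' (a : ℕ) (b : ℕ), ((KE d φ) ^ a * BE d φ p * (KE d φ) ^ b) i j := by
          apply tsum_congr; intro a; apply tsum_congr; intro b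
          exact (triple_apply _ _ _ i j).symm
      _ = ∑' n : ℕ, ∑ x ∈ Finset.HasAntidiagonal.antidiagonal n, ((KE d φ) ^ x.1 * BE d φ p * (KE d φ) ^ x.2) i j :=
          (tsum_antidiag fun a b => ((KE d φ) ^ a * BE d φ p * (KE d φ) ^ b) i j).symm
      _ = ∑' n : ℕ, (∑ x ∈ Finset.HasAntidiagonal.antidiagonal n, (KE d φ) ^ x.1 * BE d φ p * (KE d φ) ^ x.2) i j := by
          apply tsum_congr; intro n
          rw [Matrix.sum_apply]
  -- measurability of the summands
  have hmeasE : ∀ n (i j : Fin d), Measurable fun s => ENNReal.ofReal (phiIter d φ n i j s) :=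
    fun n i j => ENNReal.measurable_ofReal.comp (phiIter_meas d φ hφmeas n i j)
  have gmeas : ∀ (i j : Fin d) (n : ℕ),
      Measurable fun t => ENNReal.ofReal (t ^ p) * ENNReal.ofReal (phiIter d φ n i j t) :=
    fun i j n => (ENNReal.measurable_ofReal.comp (measurable_id.pow_const p)).mul (hmeasE n i j)
  -- pointwise identity in the summable case
  have hpt_eq : ∀ (i j : Fin d), ∀ t ∈ Ioi (0:ℝ), Summable (fun n => phiIter d φ n i j t) →
      ENNReal.ofReal (t ^ p * psiFun d φ i j t)
        = ∑' n : ℕ, ENNReal.ofReal (t ^ p) * ENNReal.ofReal (phiIter d φ n i j t) := by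
    intro i j t ht hs
    have htp : 0 ≤ t ^ p := Real.rpow_nonneg (le_of_lt ht) p
    have h1 : t ^ p * psiFun d φ i j t = ∑' n : ℕ, t ^ p * phiIter d φ n i j t :=
      (hs.tsum_mul_left (t ^ p)).symm
    rw [h1, ENNReal.ofReal_tsum_of_nonneg
      (fun n => mul_nonneg htp (phiIter_nonneg d φ hφnonneg n i j t)) (hs.mul_left _)]
    exact tsum_congr fun n => ENNReal.ofReal_mul htp
  have hpt_le : ∀ (i j : Fin d), ∀ t ∈ Ioi (0:ℝ),
      ENNReal.ofReal (t ^ p * psiFun d φ i j t)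
        ≤ ∑' n : ℕ, ENNReal.ofReal (t ^ p) * ENNReal.ofReal (phiIter d φ n i j t) := by
    intro i j t ht
    by_cases hs : Summable (fun n => phiIter d φ n i j t)
    · exact le_of_eq (hpt_eq i j t ht hs)
    · have : psiFun d φ i j t = 0 := tsum_eq_zero_of_not_summable hs
      rw [this, mul_zero, ENNReal.ofReal_zero]
      exact zero_le
  constructor
  · intro i j
    calc ∫⁻ t in Ioi (0:ℝ), ENNReal.ofReal (t ^ p * psiFun d φ i j t)
        ≤ ∫⁻ t in Ioi (0:ℝ), ∑' n : ℕ, ENNReal.ofReal (t ^ p) * ENNReal.ofReal (phiIter d φ n i j t) :=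
          setLIntegral_mono (Measurable.ennreal_tsum fun n => gmeas i j n) (hpt_le i j)
      _ = ∑' n : ℕ, ∫⁻ t in Ioi (0:ℝ), ENNReal.ofReal (t ^ p) * ENNReal.ofReal (phiIter d φ n i j t) :=
          lintegral_tsum fun n => (gmeas i j n).aemeasurable
      _ ≤ ∑' n : ℕ, (∑ x ∈ Finset.HasAntidiagonal.antidiagonal n, (KE d φ) ^ x.1 * BE d φ p * (KE d φ) ^ x.2) i j :=
          ENNReal.tsum_le_tsum fun n => (J_bound d φ hφmeas hφnonneg hint p hp n i j).1
      _ = _ := (hRHS i j).symm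
  · intro hp1 i j
    have hJeq : ∑' n : ℕ, ∫⁻ t in Ioi (0:ℝ), ENNReal.ofReal (t ^ p) * ENNReal.ofReal (phiIter d φ n i j t)
        = ENNReal.ofReal (((1 - K)⁻¹ * (Matrix.of fun i j => ∫ t in Ioi (0:ℝ), t ^ p * φ i j t) * (1 - K)⁻¹) i j) := by
      rw [hRHS i j]
      exact tsum_congr fun n => (J_bound d φ hφmeas hφnonneg hint p hp n i j).2 hp1
    have hfin : ∫⁻ t in Ioi (0:ℝ), ∑' n : ℕ, ENNReal.ofReal (t ^ p) * ENNReal.ofReal (phiIter d φ n i j t) ≠ ⊤ := by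
      rw [lintegral_tsum fun n => (gmeas i j n).aemeasurable, hJeq]
      exact ENNReal.ofReal_ne_top
    have hae2 : ∀ᵐ t ∂(volume.restrict (Ioi (0:ℝ))),
        (∑' n : ℕ, ENNReal.ofReal (t ^ p) * ENNReal.ofReal (phiIter d φ n i j t)) < ⊤ :=
      ae_lt_top (Measurable.ennreal_tsum fun n => gmeas i j n) hfin
    have haeq : (fun t => ENNReal.ofReal (t ^ p * psiFun d φ i j t))
        =ᵐ[volume.restrict (Ioi (0:ℝ))]
        (fun t => ∑' n : ℕ, ENNReal.ofReal (t ^ p) * ENNReal.ofReal (phiIter d φ n i j t)) := by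
      filter_upwards [hae2, ae_restrict_mem measurableSet_Ioi] with t hlt ht
      have ht0 : (0:ℝ) < t := ht
      have htp : 0 ≤ t ^ p := Real.rpow_nonneg (le_of_lt ht0) p
      have hsum_nn : Summable (fun n => t ^ p * phiIter d φ n i j t) := by
        have hcoe : ∑' n : ℕ, (((t ^ p * phiIter d φ n i j t).toNNReal : ℝ≥0) : ℝ≥0∞) ≠ ⊤ := by
          refine ne_of_lt (lt_of_le_of_lt (le_of_eq ?_) hlt)
          apply tsum_congr; intro n
          rw [← ENNReal.ofReal_mul htp]
          rfl
        have h2 := ENNReal.tsum_coe_ne_top_iff_summable.mp hcoe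
        have h3 : (fun n => ((t ^ p * phiIter d φ n i j t).toNNReal : ℝ))
            = fun n => t ^ p * phiIter d φ n i j t := funext fun n =>
          Real.coe_toNNReal _ (mul_nonneg htp (phiIter_nonneg d φ hφnonneg n i j t))
        exact h3 ▸ (NNReal.summable_coe.2 h2)
      have hsum : Summable (fun n => phiIter d φ n i j t) := by
        have h4 : Summable (fun n => t⁻¹ * (t ^ p * phiIter d φ n i j t)) := hsum_nn.mul_left t⁻¹
        have h5 : (fun n => t⁻¹ * (t ^ p * phiIter d φ n i j t)) = fun n => phiIter d φ n i j t := by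
          funext n
          rw [hp1, Real.rpow_one, ← mul_assoc, inv_mul_cancel₀ ht0.ne', one_mul]
        exact h5 ▸ h4
      exact hpt_eq i j t ht hsum
    rw [lintegral_congr_ae haeq, lintegral_tsum fun n => (gmeas i j n).aemeasurable, hJeq]
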